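/- arXiv:0907.1481 — 2 statements merged into one kernel-verified Lean document; each statement's English description precedes it below -/
import Mathlib

section
/- Let L be a latin square of order n and let C = {c_1, …, c_m} be a critical set of L. For each i define S_i = { T ∈ T_L : c_i ∈ T }. Then the family S_1, …, S_m has a system of distinct representatives; that is, there exists an injective function f : {1, …, m} → T_L with f(i) ∈ S_i for each i. -/
/-- A triple (row, column, entry) with all coordinates in `{0, …, n-1}`. -/
abbrev Triple (n : ℕ) := Fin n × Fin n × Fin n

/-- A partial latin square of order `n`: no two distinct triples agree in two coordinates. -/
def IsPLS {n : ℕ} (P : Finset (Triple n)) : Prop :=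
  ∀ a ∈ P, ∀ b ∈ P,
    ((a.1 = b.1 ∧ a.2.1 = b.2.1) ∨ (a.1 = b.1 ∧ a.2.2 = b.2.2) ∨
      (a.2.1 = b.2.1 ∧ a.2.2 = b.2.2)) → a = b

/-- A latin square of order `n`: a partial latin square with every cell filled. -/
def IsLS {n : ℕ} (L : Finset (Triple n)) : Prop :=
  IsPLS L ∧ ∀ r c : Fin n, ∃ e : Fin n, (r, c, e) ∈ L

/-- Condition (R2): for every triple of `T₁` and every pair of coordinates,
there is a unique triple of `T₂` agreeing with it in those two coordinates.
(Condition (R3) is `R2cond T₂ T₁`.) -/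
def R2cond {n : ℕ} (T₁ T₂ : Finset (Triple n)) : Prop :=
  ∀ a ∈ T₁,
    (∃! b, b ∈ T₂ ∧ b.1 = a.1 ∧ b.2.1 = a.2.1) ∧
    (∃! b, b ∈ T₂ ∧ b.1 = a.1 ∧ b.2.2 = a.2.2) ∧
    (∃! b, b ∈ T₂ ∧ b.2.1 = a.2.1 ∧ b.2.2 = a.2.2)

/-- A latin bitrade `(T₁, T₂)`: a pair of partial latin squares satisfying
(R1) disjointness, (R2) and (R3). -/
def IsBitrade {n : ℕ} (T₁ T₂ : Finset (Triple n)) : Prop :=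
  IsPLS T₁ ∧ IsPLS T₂ ∧ T₁ ∩ T₂ = ∅ ∧ R2cond T₁ T₂ ∧ R2cond T₂ T₁

/-- The trade space of `L`: nonempty subsets `T ⊆ L` forming a bitrade with some disjoint mate. -/
def TradeSpace {n : ℕ} (L : Finset (Triple n)) : Set (Finset (Triple n)) :=
  { T | T.Nonempty ∧ T ⊆ L ∧ ∃ T₂, IsBitrade T T₂ }

/-- `P` has unique completion to `L`: `L` is the only latin square of order `n` containing `P`. -/
def UniquelyCompletes {n : ℕ} (P L : Finset (Triple n)) : Prop :=
  ∀ L', IsLS L' → P ⊆ L' → L' = L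

/-- A critical set of `L`: a subset with unique completion to `L`, minimal with this property. -/
def IsCriticalSet {n : ℕ} (C L : Finset (Triple n)) : Prop :=
  C ⊆ L ∧ UniquelyCompletes C L ∧ ∀ C' ⊂ C, ¬ UniquelyCompletes C' L

/-- A face of the simplicial complex `Δ(L)`: a finite nonempty collection of trades of `L`
sharing a common triple. -/
def IsFace {n : ℕ} (L : Finset (Triple n)) (F : Finset (Finset (Triple n))) : Prop :=
  F.Nonempty ∧ (∀ T ∈ F, T ∈ TradeSpace L) ∧ ∃ x : Triple n, ∀ T ∈ F, x ∈ T

/-- A facet of `Δ(L)`: a face maximal under inclusion. -/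
def IsFacet {n : ℕ} (L : Finset (Triple n)) (F : Finset (Finset (Triple n))) : Prop :=
  IsFace L F ∧ ∀ F', IsFace L F' → F ⊆ F' → F' = F

/-- A vertex cover of `Δ(L)`: a set `A` of trades of `L` such that every facet is adjacent
to some `a ∈ A` (i.e. some member of the facet meets `a`). -/
def IsVertexCover {n : ℕ} (L : Finset (Triple n)) (A : Finset (Finset (Triple n))) : Prop :=
  (∀ a ∈ A, a ∈ TradeSpace L) ∧
  ∀ F, IsFacet L F → ∃ a ∈ A, ∃ T ∈ F, (T ∩ a).Nonempty

/-- A minimal vertex cover of `Δ(L)`. -/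
def IsMinimalVertexCover {n : ℕ} (L : Finset (Triple n))
    (A : Finset (Finset (Triple n))) : Prop :=
  IsVertexCover L A ∧ ∀ A' ⊂ A, ¬ IsVertexCover L A'

lemma pls_mono {n : ℕ} {P Q : Finset (Triple n)} (h : P ⊆ Q) (hQ : IsPLS Q) : IsPLS P :=
  fun a ha b hb hab => hQ a (h ha) b (h hb) hab

lemma ls_ext {n : ℕ} {L L' : Finset (Triple n)} (hL : IsLS L) (hL' : IsLS L')
    (h : L ⊆ L') : L = L' := by
  apply Finset.Subset.antisymm h
  intro a ha
  obtain ⟨e, he⟩ := hL.2 a.1 a.2.1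
  have heq : ((a.1, a.2.1, e) : Triple n) = a :=
    hL'.1 (a.1, a.2.1, e) (h he) a ha (Or.inl ⟨rfl, rfl⟩)
  exact heq ▸ he

lemma row_symbol {n : ℕ} {L : Finset (Triple n)} (hL : IsLS L) (r e : Fin n) :
    ∃ c, (r, c, e) ∈ L := by
  choose g hg using hL.2 r
  have hinj : Function.Injective g := by
    intro c1 c2 h
    have := hL.1 (r, c1, g c1) (hg c1) (r, c2, g c2) (hg c2)
      (Or.inr (Or.inl ⟨rfl, h⟩))
    simpa using congrArg (fun x => x.2.1) this
  obtain ⟨c, hc⟩ := Finite.injective_iff_surjective.mp hinj e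
  exact ⟨c, hc ▸ hg c⟩

lemma col_symbol {n : ℕ} {L : Finset (Triple n)} (hL : IsLS L) (c e : Fin n) :
    ∃ r, (r, c, e) ∈ L := by
  have h : ∀ r : Fin n, ∃ x : Fin n, (r, c, x) ∈ L := fun r => hL.2 r c
  choose g hg using h
  have hinj : Function.Injective g := by
    intro r1 r2 h
    have := hL.1 (r1, c, g r1) (hg r1) (r2, c, g r2) (hg r2)
      (Or.inr (Or.inr ⟨rfl, h⟩))
    simpa using congrArg Prod.fst this
  obtain ⟨r, hr⟩ := Finite.injective_iff_surjective.mp hinj e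
  exact ⟨r, hr ▸ hg r⟩

lemma r2_of_ls {n : ℕ} {L L' : Finset (Triple n)} (hL : IsLS L) (hL' : IsLS L') :
    R2cond (L \ L') (L' \ L) := by
  intro a ha
  obtain ⟨haL, haL'⟩ := Finset.mem_sdiff.mp ha
  obtain ⟨r, c, e⟩ := a
  refine ⟨?_, ?_, ?_⟩
  · obtain ⟨e', he'⟩ := hL'.2 r c
    refine ⟨(r, c, e'), ⟨Finset.mem_sdiff.mpr ⟨he', ?_⟩, rfl, rfl⟩, ?_⟩
    · intro hmem
      have : ((r, c, e') : Triple n) = (r, c, e) :=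
        hL.1 _ hmem _ haL (Or.inl ⟨rfl, rfl⟩)
      exact haL' (this ▸ he')
    · rintro ⟨r', c', e''⟩ ⟨hmem, h1, h2⟩
      simp only at h1 h2; subst h1; subst h2
      exact hL'.1 _ (Finset.mem_sdiff.mp hmem).1 _ he' (Or.inl ⟨rfl, rfl⟩)
  · obtain ⟨c', hc'⟩ := row_symbol hL' r e
    refine ⟨(r, c', e), ⟨Finset.mem_sdiff.mpr ⟨hc', ?_⟩, rfl, rfl⟩, ?_⟩
    · intro hmem
      have : ((r, c', e) : Triple n) = (r, c, e) :=
        hL.1 _ hmem _ haL (Or.inr (Or.inl ⟨rfl, rfl⟩))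
      exact haL' (this ▸ hc')
    · rintro ⟨r', c'', e''⟩ ⟨hmem, h1, h2⟩
      simp only at h1 h2; subst h1; subst h2
      exact hL'.1 _ (Finset.mem_sdiff.mp hmem).1 _ hc' (Or.inr (Or.inl ⟨rfl, rfl⟩))
  · obtain ⟨r', hr'⟩ := col_symbol hL' c e
    refine ⟨(r', c, e), ⟨Finset.mem_sdiff.mpr ⟨hr', ?_⟩, rfl, rfl⟩, ?_⟩
    · intro hmem
      have : ((r', c, e) : Triple n) = (r, c, e) :=
        hL.1 _ hmem _ haL (Or.inr (Or.inr ⟨rfl, rfl⟩))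
      exact haL' (this ▸ hr')
    · rintro ⟨r'', c'', e''⟩ ⟨hmem, h1, h2⟩
      simp only at h1 h2; subst h1; subst h2
      exact hL'.1 _ (Finset.mem_sdiff.mp hmem).1 _ hr' (Or.inr (Or.inr ⟨rfl, rfl⟩))

lemma trade_of_ne {n : ℕ} {L L' : Finset (Triple n)} (hL : IsLS L) (hL' : IsLS L')
    (hne : L' ≠ L) : (L \ L') ∈ TradeSpace L := by
  refine ⟨?_, Finset.sdiff_subset, L' \ L, pls_mono Finset.sdiff_subset hL.1,
    pls_mono Finset.sdiff_subset hL'.1, ?_, r2_of_ls hL hL', r2_of_ls hL' hL⟩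
  · rw [Finset.sdiff_nonempty]
    intro hsub
    exact hne (ls_ext hL hL' hsub).symm
  · rw [Finset.eq_empty_iff_forall_notMem]
    intro x hx
    simp only [Finset.mem_inter, Finset.mem_sdiff] at hx
    exact hx.1.2 hx.2.1

/-- The family of sets `S_c = {T ∈ T_L : c ∈ T}`, indexed by the entries `c` of a critical
set `C`, has a system of distinct representatives. -/
theorem critical_set_has_sdr {n : ℕ} (L C : Finset (Triple n))
    (hL : IsLS L) (hC : IsCriticalSet C L) :
    ∃ f : Triple n → Finset (Triple n),
      (∀ c ∈ C, f c ∈ TradeSpace L ∧ c ∈ f c) ∧ Set.InjOn f ↑C := by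
  classical
  have key : ∀ c ∈ C, ∃ L', IsLS L' ∧ C.erase c ⊆ L' ∧ L' ≠ L := by
    intro c hc
    have hss : C.erase c ⊂ C := Finset.erase_ssubset hc
    have := hC.2.2 _ hss
    simp only [UniquelyCompletes, not_forall] at this
    obtain ⟨L', h1, h2, h3⟩ := this
    exact ⟨L', h1, h2, h3⟩
  choose! g hg1 hg2 hg3 using key
  have hnotin : ∀ c ∈ C, c ∉ g c := by
    intro c hc hcg
    apply hg3 c hc
    apply hC.2.1 _ (hg1 c hc)
    intro x hx
    rcases eq_or_ne x c with rfl | hne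
    · exact hcg
    · exact hg2 c hc (Finset.mem_erase.mpr ⟨hne, hx⟩)
  refine ⟨fun c => L \ g c, fun c hc => ⟨trade_of_ne hL (hg1 c hc) (hg3 c hc), ?_⟩, ?_⟩
  · exact Finset.mem_sdiff.mpr ⟨hC.1 hc, hnotin c hc⟩
  · intro c hc d hd heq
    simp only [Finset.coe_mem, Finset.mem_coe] at hc hd
    simp only at heq
    by_contra hne
    have hcd : c ∈ L \ g d := heq ▸ Finset.mem_sdiff.mpr ⟨hC.1 hc, hnotin c hc⟩
    exact (Finset.mem_sdiff.mp hcd).2 (hg2 d hd (Finset.mem_erase.mpr ⟨hne, hc⟩))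
end

section
/- Let L be a latin square of order n and let P ⊆ L be a partial latin square. Then P has unique completion to L if and only if P ∩ T ≠ ∅ for every trade T ∈ T_L. -/
section Aux

variable {n : ℕ}

lemma ls_card {L : Finset (Triple n)} (h : IsLS L) : L.card = n * n := by
  have : L.card = (Finset.univ : Finset (Fin n × Fin n)).card := by
    apply Finset.card_bij (fun a _ => (a.1, a.2.1))
    · intro a _; exact Finset.mem_univ _
    · intro a ha b hb hab
      have h1 := congrArg Prod.fst hab
      have h2 := congrArg Prod.snd hab
      exact h.1 a ha b hb (Or.inl ⟨h1, h2⟩)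
    · intro p _
      obtain ⟨e, he⟩ := h.2 p.1 p.2
      exact ⟨(p.1, p.2, e), he, rfl⟩
  simpa using this

lemma ls_row_symbol {L : Finset (Triple n)} (h : IsLS L) (r e : Fin n) :
    ∃ c, (r, c, e) ∈ L := by
  have hne : ∀ c : Fin n, (Classical.choose (h.2 r c) : Fin n) = e → (r, c, e) ∈ L := by
    intro c hc; have := Classical.choose_spec (h.2 r c); rwa [hc] at this
  have hinj : Function.Injective (fun c => Classical.choose (h.2 r c)) := by
    intro c₁ c₂ hc
    have h₁ := Classical.choose_spec (h.2 r c₁)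
    have h₂ := Classical.choose_spec (h.2 r c₂)
    have := h.1 _ h₁ _ h₂ (Or.inr (Or.inl ⟨rfl, hc⟩))
    exact (congrArg (fun t => t.2.1) this)
  obtain ⟨c, hc⟩ := (Finite.injective_iff_surjective.mp hinj) e
  exact ⟨c, hne c hc⟩

lemma ls_col_symbol {L : Finset (Triple n)} (h : IsLS L) (c e : Fin n) :
    ∃ r, (r, c, e) ∈ L := by
  have hne : ∀ r : Fin n, (Classical.choose (h.2 r c) : Fin n) = e → (r, c, e) ∈ L := by
    intro r hr; have := Classical.choose_spec (h.2 r c); rwa [hr] at this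
  have hinj : Function.Injective (fun r => Classical.choose (h.2 r c)) := by
    intro r₁ r₂ hr
    have h₁ := Classical.choose_spec (h.2 r₁ c)
    have h₂ := Classical.choose_spec (h.2 r₂ c)
    have := h.1 _ h₁ _ h₂ (Or.inr (Or.inr ⟨rfl, hr⟩))
    exact (congrArg (fun t => t.1) this)
  obtain ⟨r, hr⟩ := (Finite.injective_iff_surjective.mp hinj) e
  exact ⟨r, hne r hr⟩

lemma pls_subset {P Q : Finset (Triple n)} (h : IsPLS Q) (hs : P ⊆ Q) : IsPLS P :=
  fun a ha b hb => h a (hs ha) b (hs hb)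

lemma diff_bitrade {L L' : Finset (Triple n)} (hL : IsLS L) (hL' : IsLS L') :
    IsBitrade (L \ L') (L' \ L) := by
  have key : ∀ (M M' : Finset (Triple n)), IsLS M → IsLS M' →
      R2cond (M \ M') (M' \ M) := by
    intro M M' hM hM' a ha
    rw [Finset.mem_sdiff] at ha
    obtain ⟨haM, haM'⟩ := ha
    refine ⟨?_, ?_, ?_⟩
    · obtain ⟨e', he'⟩ := hM'.2 a.1 a.2.1
      refine ⟨(a.1, a.2.1, e'), ⟨Finset.mem_sdiff.2 ⟨he', ?_⟩, rfl, rfl⟩, ?_⟩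
      · intro hmem
        have := hM.1 _ hmem _ haM (Or.inl ⟨rfl, rfl⟩)
        exact haM' (this ▸ he')
      · rintro b ⟨hb, hb1, hb2⟩
        rw [Finset.mem_sdiff] at hb
        exact hM'.1 _ hb.1 _ he' (Or.inl ⟨hb1, hb2⟩)
    · obtain ⟨c', hc'⟩ := ls_row_symbol hM' a.1 a.2.2
      refine ⟨(a.1, c', a.2.2), ⟨Finset.mem_sdiff.2 ⟨hc', ?_⟩, rfl, rfl⟩, ?_⟩
      · intro hmem
        have := hM.1 _ hmem _ haM (Or.inr (Or.inl ⟨rfl, rfl⟩))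
        exact haM' (this ▸ hc')
      · rintro b ⟨hb, hb1, hb2⟩
        rw [Finset.mem_sdiff] at hb
        exact hM'.1 _ hb.1 _ hc' (Or.inr (Or.inl ⟨hb1, hb2⟩))
    · obtain ⟨r', hr'⟩ := ls_col_symbol hM' a.2.1 a.2.2
      refine ⟨(r', a.2.1, a.2.2), ⟨Finset.mem_sdiff.2 ⟨hr', ?_⟩, rfl, rfl⟩, ?_⟩
      · intro hmem
        have := hM.1 _ hmem _ haM (Or.inr (Or.inr ⟨rfl, rfl⟩))
        exact haM' (this ▸ hr')
      · rintro b ⟨hb, hb1, hb2⟩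
        rw [Finset.mem_sdiff] at hb
        exact hM'.1 _ hb.1 _ hr' (Or.inr (Or.inr ⟨hb1, hb2⟩))
  refine ⟨pls_subset hL.1 Finset.sdiff_subset, pls_subset hL'.1 Finset.sdiff_subset,
    ?_, key L L' hL hL', key L' L hL' hL⟩
  ext x
  simp only [Finset.mem_inter, Finset.mem_sdiff, Finset.notMem_empty, iff_false]
  tauto

lemma swap_ls {L T T₂ : Finset (Triple n)} (hL : IsLS L) (hT : T ⊆ L)
    (hB : IsBitrade T T₂) : IsLS ((L \ T) ∪ T₂) := by
  obtain ⟨hT1, hT2, hdisj, hR2, hR3⟩ := hB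
  have mixed : ∀ a ∈ L \ T, ∀ b ∈ T₂,
      ((a.1 = b.1 ∧ a.2.1 = b.2.1) ∨ (a.1 = b.1 ∧ a.2.2 = b.2.2) ∨
        (a.2.1 = b.2.1 ∧ a.2.2 = b.2.2)) → False := by
    intro a ha b hb hag
    rw [Finset.mem_sdiff] at ha
    obtain ⟨hc2, hc3⟩ := hR3 b hb
    rcases hag with ⟨h1, h2⟩ | ⟨h1, h2⟩ | ⟨h1, h2⟩
    · obtain ⟨c, ⟨hcT, hc1, hc2'⟩, _⟩ := (hR3 b hb).1
      have : a = c := hL.1 a ha.1 c (hT hcT) (Or.inl ⟨h1.trans hc1.symm, h2.trans hc2'.symm⟩)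
      exact ha.2 (this ▸ hcT)
    · obtain ⟨c, ⟨hcT, hc1, hc2'⟩, _⟩ := (hR3 b hb).2.1
      have : a = c := hL.1 a ha.1 c (hT hcT)
        (Or.inr (Or.inl ⟨h1.trans hc1.symm, h2.trans hc2'.symm⟩))
      exact ha.2 (this ▸ hcT)
    · obtain ⟨c, ⟨hcT, hc1, hc2'⟩, _⟩ := (hR3 b hb).2.2
      have : a = c := hL.1 a ha.1 c (hT hcT)
        (Or.inr (Or.inr ⟨h1.trans hc1.symm, h2.trans hc2'.symm⟩))
      exact ha.2 (this ▸ hcT)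
  constructor
  · intro a ha b hb hag
    rcases Finset.mem_union.1 ha with ha' | ha' <;>
      rcases Finset.mem_union.1 hb with hb' | hb'
    · exact hL.1 a (Finset.mem_sdiff.1 ha').1 b (Finset.mem_sdiff.1 hb').1 hag
    · exact absurd (mixed a ha' b hb' hag) (by simp)
    · exact absurd (mixed b hb' a ha' (by tauto)) (by simp)
    · exact hT2 a ha' b hb' hag
  · intro r c
    obtain ⟨e, he⟩ := hL.2 r c
    by_cases hmem : (r, c, e) ∈ T
    · obtain ⟨b, ⟨hbT₂, hb1, hb2⟩, _⟩ := (hR2 _ hmem).1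
      refine ⟨b.2.2, Finset.mem_union_right _ ?_⟩
      have : (r, c, b.2.2) = b := by
        simp only at hb1 hb2
        exact Prod.ext hb1.symm (Prod.ext hb2.symm rfl)
      rwa [this]
    · exact ⟨e, Finset.mem_union_left _ (Finset.mem_sdiff.2 ⟨he, hmem⟩)⟩

end Aux

/-- A partial latin square `P ⊆ L` has unique completion to `L` iff it meets every trade
in the trade space of `L`. -/
theorem uniquely_completes_iff_meets_every_trade {n : ℕ} (L P : Finset (Triple n))
    (hL : IsLS L) (hP : P ⊆ L) :
    UniquelyCompletes P L ↔ ∀ T ∈ TradeSpace L, (P ∩ T).Nonempty := by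
  constructor
  · intro hU T hT
    by_contra hne
    obtain ⟨hTne, hTL, T₂, hB⟩ := hT
    have hLS' : IsLS ((L \ T) ∪ T₂) := swap_ls hL hTL hB
    have hPL' : P ⊆ (L \ T) ∪ T₂ := by
      intro x hx
      refine Finset.mem_union_left _ (Finset.mem_sdiff.2 ⟨hP hx, fun hxT => ?_⟩)
      exact hne ⟨x, Finset.mem_inter.2 ⟨hx, hxT⟩⟩
    have heq := hU _ hLS' hPL'
    obtain ⟨t, ht⟩ := hTne
    have htL' : t ∈ (L \ T) ∪ T₂ := by
      have := hTL ht
      rwa [← heq] at this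
    rcases Finset.mem_union.1 htL' with h | h
    · exact (Finset.mem_sdiff.1 h).2 ht
    · have : t ∈ T ∩ T₂ := Finset.mem_inter.2 ⟨ht, h⟩
      rw [hB.2.2.1] at this
      exact absurd this (Finset.notMem_empty t)
  · intro hmeet L' hLS' hPL'
    by_contra hne
    have hTne : (L \ L').Nonempty := by
      rw [Finset.sdiff_nonempty]
      intro hsub
      exact hne (Finset.eq_of_subset_of_card_le hsub
        (by rw [ls_card hL, ls_card hLS']) ).symm
    obtain ⟨x, hx⟩ := hmeet (L \ L')
      ⟨hTne, Finset.sdiff_subset, L' \ L, diff_bitrade hL hLS'⟩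
    rw [Finset.mem_inter, Finset.mem_sdiff] at hx
    exact hx.2.2 (hPL' hx.1)
end
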